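/- arXiv:2407.18457 — 3 statements merged into one kernel-verified Lean document; each statement's English description precedes it below -/
import Mathlib

section
/- Let f1, f2 : ℝ → ℝ be continuous and let p1, p2 : ℝ → ℝ be polynomial functions of degree at most 1; set u(x,y) = f1(x)·p1(y) + f2(y)·p2(x). Let P be the bilinear corner interpolant on the unit square of u and let s be the linear transfinite boundary interpolant on the unit square of u − P. Then u(x,y) = s(x,y) + P(x,y) for all (x,y) ∈ [0,1]². -/
/-- The bilinear corner interpolant on the unit square. -/
noncomputable def bilinearCorner (u : ℝ → ℝ → ℝ) (x y : ℝ) : ℝ :=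
  (1 - x) * (1 - y) * u 0 0 + (1 - x) * y * u 0 1 + x * (1 - y) * u 1 0 + x * y * u 1 1

/-- The linear transfinite boundary interpolant on the unit square. -/
noncomputable def linTransfinite (v : ℝ → ℝ → ℝ) (x y : ℝ) : ℝ :=
  (1 - x) * v 0 y + x * v 1 y + (1 - y) * v x 0 + y * v x 1


lemma lin_eval (p : Polynomial ℝ) (hp : p.degree ≤ 1) (t : ℝ) :
    p.eval t = (1 - t) * p.eval 0 + t * p.eval 1 := by
  obtain ⟨a, b, rfl⟩ := Polynomial.exists_eq_X_add_C_of_natDegree_le_one (Polynomial.natDegree_le_iff_degree_le.2 hp)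
  simp [Polynomial.eval_add, Polynomial.eval_mul]
  ring

/-- Core of the proof of Theorem 2.2: for `u(x,y) = f1(x)p1(y) + f2(y)p2(x)` with
`deg p1, deg p2 ≤ 1`, the deterministic part `s + P` reproduces `u` on the unit square. -/
theorem deterministic_part_reproduces_u
    (f1 f2 : ℝ → ℝ) (hf1 : Continuous f1) (hf2 : Continuous f2)
    (p1 p2 : Polynomial ℝ) (hp1 : p1.degree ≤ 1) (hp2 : p2.degree ≤ 1)
    (u : ℝ → ℝ → ℝ)
    (hu : ∀ x y : ℝ, u x y = f1 x * p1.eval y + f2 y * p2.eval x)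
    (P : ℝ → ℝ → ℝ) (hP : ∀ x y : ℝ, P x y = bilinearCorner u x y)
    (s : ℝ → ℝ → ℝ)
    (hs : ∀ x y : ℝ, s x y = linTransfinite (fun a b => u a b - P a b) x y) :
    ∀ x ∈ Set.Icc (0 : ℝ) 1, ∀ y ∈ Set.Icc (0 : ℝ) 1,
      u x y = s x y + P x y := by
  intro x hx y hy
  have e1 := lin_eval p1 hp1
  have e2 := lin_eval p2 hp2
  simp only [hs, hP, linTransfinite, bilinearCorner, hu]
  rw [e1 y, e2 x]
  ring
end

section
/- Let u : ℝ² → ℝ be C², let P be the bicubic Hermite corner interpolant on the unit square of u, and let s be the Hermite transfinite boundary interpolant on the unit square of ũ = u − P. Then for every differentiable function φ : ℝ² → ℝ, the function û(x,y) = x²(1−x)²y²(1−y)²·φ(x,y) + s(x,y) + P(x,y) satisfies, for all x, y ∈ [0,1]: û(0,y) = u(0,y), û(1,y) = u(1,y), û(x,0) = u(x,0), û(x,1) = u(x,1), and ∂û/∂x(0,y) = ∂u/∂x(0,y), ∂û/∂x(1,y) = ∂u/∂x(1,y), ∂û/∂y(x,0) = ∂u/∂y(x,0), ∂û/∂y(x,1)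 = ∂u/∂y(x,1). In other words, û satisfies the clamped boundary conditions û = u and ∂û/∂n = ∂u/∂n exactly on the boundary of [0,1]². -/
/-- Cubic Hermite basis functions on `[0,1]`. -/
noncomputable def H0 (x : ℝ) : ℝ := (1 - x) ^ 2 * (1 + 2 * x)
noncomputable def H1 (x : ℝ) : ℝ := x ^ 2 * (3 - 2 * x)
noncomputable def G0 (x : ℝ) : ℝ := x * (1 - x) ^ 2
noncomputable def G1 (x : ℝ) : ℝ := x ^ 2 * (x - 1)

/-- Partial derivative in the first variable. -/
noncomputable def pdx (v : ℝ → ℝ → ℝ) (x y : ℝ) : ℝ := deriv (fun t => v t y) x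

/-- Partial derivative in the second variable. -/
noncomputable def pdy (v : ℝ → ℝ → ℝ) (x y : ℝ) : ℝ := deriv (fun t => v x t) y

/-- Mixed second partial derivative `∂²v/∂x∂y`. -/
noncomputable def pdxy (v : ℝ → ℝ → ℝ) (x y : ℝ) : ℝ := pdx (fun a b => pdy v a b) x y

/-- The bicubic Hermite corner interpolant on the unit square. -/
noncomputable def bicubicCorner (u : ℝ → ℝ → ℝ) (x y : ℝ) : ℝ :=
    H0 x * H0 y * u 0 0 + H0 x * H1 y * u 0 1
  + H1 x * H0 y * u 1 0 + H1 x * H1 y * u 1 1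
  + G0 x * H0 y * pdx u 0 0 + G0 x * H1 y * pdx u 0 1
  + G1 x * H0 y * pdx u 1 0 + G1 x * H1 y * pdx u 1 1
  + H0 x * G0 y * pdy u 0 0 + H0 x * G1 y * pdy u 0 1
  + H1 x * G0 y * pdy u 1 0 + H1 x * G1 y * pdy u 1 1
  + G0 x * G0 y * pdxy u 0 0 + G0 x * G1 y * pdxy u 0 1
  + G1 x * G0 y * pdxy u 1 0 + G1 x * G1 y * pdxy u 1 1

/-- The Hermite transfinite boundary interpolant on the unit square. -/
noncomputable def hermiteTransfinite (v : ℝ → ℝ → ℝ) (x y : ℝ) : ℝ :=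
    H0 x * v 0 y + H1 x * v 1 y + H0 y * v x 0 + H1 y * v x 1
  + G0 x * pdx v 0 y + G1 x * pdx v 1 y + G0 y * pdy v x 0 + G1 y * pdy v x 1

/-! ### Auxiliary lemmas -/

lemma hasDerivAt_H0 (x : ℝ) : HasDerivAt H0 (6*x^2 - 6*x) x := by
  have e : H0 = fun x : ℝ => 2*x^3 - 3*x^2 + 1 := by funext t; simp [H0]; ring
  rw [e]
  have h := (((hasDerivAt_pow 3 x).const_mul (2:ℝ)).sub
    ((hasDerivAt_pow 2 x).const_mul (3:ℝ))).add_const 1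
  refine h.congr_deriv ?_
  push_cast; ring

lemma hasDerivAt_H1 (x : ℝ) : HasDerivAt H1 (6*x - 6*x^2) x := by
  have e : H1 = fun x : ℝ => -(2*x^3) + 3*x^2 := by funext t; simp [H1]; ring
  rw [e]
  have h := (((hasDerivAt_pow 3 x).const_mul (2:ℝ)).neg).add
    ((hasDerivAt_pow 2 x).const_mul (3:ℝ))
  refine h.congr_deriv ?_
  push_cast; ring

lemma hasDerivAt_G0 (x : ℝ) : HasDerivAt G0 (3*x^2 - 4*x + 1) x := by
  have e : G0 = fun x : ℝ => x^3 - 2*x^2 + x := by funext t; simp [G0]; ring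
  rw [e]
  have h := (((hasDerivAt_pow 3 x)).sub
    ((hasDerivAt_pow 2 x).const_mul (2:ℝ))).add (hasDerivAt_id x)
  refine h.congr_deriv ?_
  push_cast; ring

lemma hasDerivAt_G1 (x : ℝ) : HasDerivAt G1 (3*x^2 - 2*x) x := by
  have e : G1 = fun x : ℝ => x^3 - x^2 := by funext t; simp [G1]; ring
  rw [e]
  have h := ((hasDerivAt_pow 3 x)).sub (hasDerivAt_pow 2 x)
  refine h.congr_deriv ?_
  push_cast; ring

@[simp] lemma H0_zero : H0 0 = 1 := by simp [H0]
@[simp] lemma H0_one : H0 1 = 0 := by simp [H0]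
@[simp] lemma H1_zero : H1 0 = 0 := by simp [H1]
@[simp] lemma H1_one : H1 1 = 1 := by norm_num [H1]
@[simp] lemma G0_zero : G0 0 = 0 := by simp [G0]
@[simp] lemma G0_one : G0 1 = 0 := by simp [G0]
@[simp] lemma G1_zero : G1 0 = 0 := by simp [G1]
@[simp] lemma G1_one : G1 1 = 0 := by simp [G1]

/-- A generic cubic Hermite combination. -/
noncomputable def combo (A B C D t : ℝ) : ℝ := A * H0 t + B * H1 t + C * G0 t + D * G1 t

lemma combo_hasDerivAt (A B C D x : ℝ) :
    HasDerivAt (combo A B C D)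
      (A*(6*x^2-6*x) + B*(6*x-6*x^2) + C*(3*x^2-4*x+1) + D*(3*x^2-2*x)) x :=
  ((((hasDerivAt_H0 x).const_mul A).add ((hasDerivAt_H1 x).const_mul B)).add
      ((hasDerivAt_G0 x).const_mul C)).add ((hasDerivAt_G1 x).const_mul D)

lemma combo_hasDerivAt_zero (A B C D : ℝ) : HasDerivAt (combo A B C D) C 0 := by
  have h := combo_hasDerivAt A B C D 0
  have e : A*(6*(0:ℝ)^2-6*0) + B*(6*0-6*(0:ℝ)^2) + C*(3*(0:ℝ)^2-4*0+1)
      + D*(3*(0:ℝ)^2-2*0) = C := by ring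
  rwa [e] at h

lemma combo_hasDerivAt_one (A B C D : ℝ) : HasDerivAt (combo A B C D) D 1 := by
  have h := combo_hasDerivAt A B C D 1
  have e : A*(6*(1:ℝ)^2-6*1) + B*(6*1-6*(1:ℝ)^2) + C*(3*(1:ℝ)^2-4*1+1)
      + D*(3*(1:ℝ)^2-2*1) = D := by ring
  rwa [e] at h

@[simp] lemma combo_zero (A B C D : ℝ) : combo A B C D 0 = A := by simp [combo]
@[simp] lemma combo_one (A B C D : ℝ) : combo A B C D 1 = B := by simp [combo]

lemma bicubic_comboX (u : ℝ → ℝ → ℝ) (y : ℝ) :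
    (fun t => bicubicCorner u t y) = combo
      (H0 y * u 0 0 + H1 y * u 0 1 + G0 y * pdy u 0 0 + G1 y * pdy u 0 1)
      (H0 y * u 1 0 + H1 y * u 1 1 + G0 y * pdy u 1 0 + G1 y * pdy u 1 1)
      (H0 y * pdx u 0 0 + H1 y * pdx u 0 1 + G0 y * pdxy u 0 0 + G1 y * pdxy u 0 1)
      (H0 y * pdx u 1 0 + H1 y * pdx u 1 1 + G0 y * pdxy u 1 0 + G1 y * pdxy u 1 1) := by
  funext t; simp only [bicubicCorner, combo]; ring

lemma bicubic_comboY (u : ℝ → ℝ → ℝ) (x : ℝ) :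
    (fun t => bicubicCorner u x t) = combo
      (H0 x * u 0 0 + H1 x * u 1 0 + G0 x * pdx u 0 0 + G1 x * pdx u 1 0)
      (H0 x * u 0 1 + H1 x * u 1 1 + G0 x * pdx u 0 1 + G1 x * pdx u 1 1)
      (H0 x * pdy u 0 0 + H1 x * pdy u 1 0 + G0 x * pdxy u 0 0 + G1 x * pdxy u 1 0)
      (H0 x * pdy u 0 1 + H1 x * pdy u 1 1 + G0 x * pdxy u 0 1 + G1 x * pdxy u 1 1) := by
  funext t; simp only [bicubicCorner, combo]; ring

lemma hPx (u : ℝ → ℝ → ℝ) (a b : ℝ) :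
    HasDerivAt (fun t => bicubicCorner u t b) (pdx (bicubicCorner u) a b) a := by
  have e : pdx (bicubicCorner u) a b = deriv (fun t => bicubicCorner u t b) a := rfl
  rw [e, bicubic_comboX u b]
  exact (combo_hasDerivAt _ _ _ _ a).differentiableAt.hasDerivAt

lemma hPy (u : ℝ → ℝ → ℝ) (a b : ℝ) :
    HasDerivAt (fun t => bicubicCorner u a t) (pdy (bicubicCorner u) a b) b := by
  have e : pdy (bicubicCorner u) a b = deriv (fun t => bicubicCorner u a t) b := rfl
  rw [e, bicubic_comboY u a]
  exact (combo_hasDerivAt _ _ _ _ b).differentiableAt.hasDerivAt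

lemma pdxP0 (u : ℝ → ℝ → ℝ) (b : ℝ) :
    pdx (bicubicCorner u) 0 b
      = combo (pdx u 0 0) (pdx u 0 1) (pdxy u 0 0) (pdxy u 0 1) b := by
  have e : pdx (bicubicCorner u) 0 b = deriv (fun t => bicubicCorner u t b) 0 := rfl
  rw [e, bicubic_comboX u b, (combo_hasDerivAt _ _ _ _ 0).deriv]
  simp only [combo]; ring

lemma pdxP1 (u : ℝ → ℝ → ℝ) (b : ℝ) :
    pdx (bicubicCorner u) 1 b
      = combo (pdx u 1 0) (pdx u 1 1) (pdxy u 1 0) (pdxy u 1 1) b := by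
  have e : pdx (bicubicCorner u) 1 b = deriv (fun t => bicubicCorner u t b) 1 := rfl
  rw [e, bicubic_comboX u b, (combo_hasDerivAt _ _ _ _ 1).deriv]
  simp only [combo]; ring

lemma pdyP0 (u : ℝ → ℝ → ℝ) (a : ℝ) :
    pdy (bicubicCorner u) a 0
      = combo (pdy u 0 0) (pdy u 1 0) (pdxy u 0 0) (pdxy u 1 0) a := by
  have e : pdy (bicubicCorner u) a 0 = deriv (fun t => bicubicCorner u a t) 0 := rfl
  rw [e, bicubic_comboY u a, (combo_hasDerivAt _ _ _ _ 0).deriv]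
  simp only [combo]; ring

lemma pdyP1 (u : ℝ → ℝ → ℝ) (a : ℝ) :
    pdy (bicubicCorner u) a 1
      = combo (pdy u 0 1) (pdy u 1 1) (pdxy u 0 1) (pdxy u 1 1) a := by
  have e : pdy (bicubicCorner u) a 1 = deriv (fun t => bicubicCorner u a t) 1 := rfl
  rw [e, bicubic_comboY u a, (combo_hasDerivAt _ _ _ _ 1).deriv]
  simp only [combo]; ring

lemma bc00 (u : ℝ → ℝ → ℝ) : bicubicCorner u 0 0 = u 0 0 := by simp [bicubicCorner]
lemma bc01 (u : ℝ → ℝ → ℝ) : bicubicCorner u 0 1 = u 0 1 := by simp [bicubicCorner]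
lemma bc10 (u : ℝ → ℝ → ℝ) : bicubicCorner u 1 0 = u 1 0 := by simp [bicubicCorner]
lemma bc11 (u : ℝ → ℝ → ℝ) : bicubicCorner u 1 1 = u 1 1 := by simp [bicubicCorner]

section UCalc

variable {u : ℝ → ℝ → ℝ} (hu : ContDiff ℝ 2 (fun p : ℝ × ℝ => u p.1 p.2))

lemma curveX (a b : ℝ) : HasDerivAt (fun t : ℝ => ((t, b) : ℝ × ℝ)) (1, 0) a :=
  (hasDerivAt_id a).prodMk (hasDerivAt_const a b)

lemma curveY (a b : ℝ) : HasDerivAt (fun t : ℝ => ((a, t) : ℝ × ℝ)) (0, 1) b :=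
  (hasDerivAt_const b a).prodMk (hasDerivAt_id b)

include hu

lemma hux (a b : ℝ) :
    HasDerivAt (fun t => u t b) (fderiv ℝ (fun p : ℝ × ℝ => u p.1 p.2) (a, b) (1, 0)) a :=
  ((hu.differentiable two_ne_zero (a, b)).hasFDerivAt).comp_hasDerivAt (f := fun t : ℝ => ((t, b) : ℝ × ℝ)) a (curveX a b)

lemma huy (a b : ℝ) :
    HasDerivAt (fun t => u a t) (fderiv ℝ (fun p : ℝ × ℝ => u p.1 p.2) (a, b) (0, 1)) b :=
  ((hu.differentiable two_ne_zero (a, b)).hasFDerivAt).comp_hasDerivAt b (curveY a b)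

lemma pdx_eq (a b : ℝ) :
    pdx u a b = fderiv ℝ (fun p : ℝ × ℝ => u p.1 p.2) (a, b) (1, 0) := (hux hu a b).deriv

lemma pdy_eq (a b : ℝ) :
    pdy u a b = fderiv ℝ (fun p : ℝ × ℝ => u p.1 p.2) (a, b) (0, 1) := (huy hu a b).deriv

lemma hf'd : Differentiable ℝ (fderiv ℝ (fun p : ℝ × ℝ => u p.1 p.2)) :=
  (hu.fderiv_right (le_refl 2)).differentiable one_ne_zero

lemma hdyx_raw (a b : ℝ) :
    HasDerivAt (fun t => pdy u t b)
      (fderiv ℝ (fderiv ℝ (fun p : ℝ × ℝ => u p.1 p.2)) (a, b) (1, 0) (0, 1)) a := by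
  have h1 : HasDerivAt (fun t => fderiv ℝ (fun p : ℝ × ℝ => u p.1 p.2) (t, b))
      (fderiv ℝ (fderiv ℝ (fun p : ℝ × ℝ => u p.1 p.2)) (a, b) (1, 0)) a :=
    ((hf'd hu (a, b)).hasFDerivAt).comp_hasDerivAt a (curveX a b)
  have h2 := ((ContinuousLinearMap.apply ℝ ℝ
    (((0 : ℝ), (1 : ℝ)) : ℝ × ℝ)).hasFDerivAt).comp_hasDerivAt a h1
  exact h2.congr_of_eventuallyEq (Filter.Eventually.of_forall fun t => by
    simp only [Function.comp_apply, ContinuousLinearMap.apply_apply]; exact pdy_eq hu t b)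

lemma hdxy_raw (a b : ℝ) :
    HasDerivAt (fun t => pdx u a t)
      (fderiv ℝ (fderiv ℝ (fun p : ℝ × ℝ => u p.1 p.2)) (a, b) (0, 1) (1, 0)) b := by
  have h1 : HasDerivAt (fun t => fderiv ℝ (fun p : ℝ × ℝ => u p.1 p.2) (a, t))
      (fderiv ℝ (fderiv ℝ (fun p : ℝ × ℝ => u p.1 p.2)) (a, b) (0, 1)) b :=
    ((hf'd hu (a, b)).hasFDerivAt).comp_hasDerivAt b (curveY a b)
  have h2 := ((ContinuousLinearMap.apply ℝ ℝ
    (((1 : ℝ), (0 : ℝ)) : ℝ × ℝ)).hasFDerivAt).comp_hasDerivAt b h1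
  exact h2.congr_of_eventuallyEq (Filter.Eventually.of_forall fun t => by
    simp only [Function.comp_apply, ContinuousLinearMap.apply_apply]; exact pdx_eq hu a t)

lemma pdxy_eq (a b : ℝ) :
    pdxy u a b = fderiv ℝ (fderiv ℝ (fun p : ℝ × ℝ => u p.1 p.2)) (a, b) (1, 0) (0, 1) :=
  (hdyx_raw hu a b).deriv

lemma hdyx (a b : ℝ) : HasDerivAt (fun t => pdy u t b) (pdxy u a b) a := by
  rw [pdxy_eq hu a b]; exact hdyx_raw hu a b

lemma hdxy (a b : ℝ) : HasDerivAt (fun t => pdx u a t) (pdxy u a b) b := by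
  have hsymm : fderiv ℝ (fderiv ℝ (fun p : ℝ × ℝ => u p.1 p.2)) (a, b) (0, 1) (1, 0)
      = fderiv ℝ (fderiv ℝ (fun p : ℝ × ℝ => u p.1 p.2)) (a, b) (1, 0) (0, 1) :=
    second_derivative_symmetric
      (fun p => ((hu.differentiable two_ne_zero p).hasFDerivAt))
      ((hf'd hu (a, b)).hasFDerivAt) _ _
  rw [pdxy_eq hu a b, ← hsymm]
  exact hdxy_raw hu a b

lemma hux' (a b : ℝ) : HasDerivAt (fun t => u t b) (pdx u a b) a := by
  rw [pdx_eq hu a b]; exact hux hu a b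

lemma huy' (a b : ℝ) : HasDerivAt (fun t => u a t) (pdy u a b) b := by
  rw [pdy_eq hu a b]; exact huy hu a b

lemma hutx (a b : ℝ) :
    HasDerivAt (fun t => u t b - bicubicCorner u t b)
      (pdx u a b - pdx (bicubicCorner u) a b) a :=
  (hux' hu a b).sub (hPx u a b)

lemma huty (a b : ℝ) :
    HasDerivAt (fun t => u a t - bicubicCorner u a t)
      (pdy u a b - pdy (bicubicCorner u) a b) b :=
  (huy' hu a b).sub (hPy u a b)

lemma utx (a b : ℝ) :
    pdx (fun a b => u a b - bicubicCorner u a b) a b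
      = pdx u a b - pdx (bicubicCorner u) a b :=
  (hutx hu a b).deriv

lemma uty (a b : ℝ) :
    pdy (fun a b => u a b - bicubicCorner u a b) a b
      = pdy u a b - pdy (bicubicCorner u) a b :=
  (huty hu a b).deriv

end UCalc
/-- Theorem 3.1: the RNN-BP solution satisfies the clamped boundary condition exactly. -/
theorem rnnBP_clamped_exact
    (u : ℝ → ℝ → ℝ) (hu : ContDiff ℝ 2 (fun p : ℝ × ℝ => u p.1 p.2))
    (φ : ℝ → ℝ → ℝ) (hφ : Differentiable ℝ (fun p : ℝ × ℝ => φ p.1 p.2))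
    (uhat : ℝ → ℝ → ℝ)
    (huhat : ∀ x y : ℝ, uhat x y =
      x ^ 2 * (1 - x) ^ 2 * y ^ 2 * (1 - y) ^ 2 * φ x y
        + hermiteTransfinite (fun a b => u a b - bicubicCorner u a b) x y
        + bicubicCorner u x y) :
    ∀ x ∈ Set.Icc (0 : ℝ) 1, ∀ y ∈ Set.Icc (0 : ℝ) 1,
      uhat 0 y = u 0 y ∧ uhat 1 y = u 1 y ∧ uhat x 0 = u x 0 ∧ uhat x 1 = u x 1 ∧
      pdx uhat 0 y = pdx u 0 y ∧ pdx uhat 1 y = pdx u 1 y ∧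
      pdy uhat x 0 = pdy u x 0 ∧ pdy uhat x 1 = pdy u x 1 := by
  intro x hx y hy
  -- differentiability of the slices of φ
  have hφx : ∀ b : ℝ, Differentiable ℝ (fun t => φ t b) := fun b => by
    exact hφ.comp (differentiable_fun_id.prodMk (differentiable_const b))
  have hφy : ∀ a : ℝ, Differentiable ℝ (fun t => φ a t) := fun a => by
    exact hφ.comp ((differentiable_const a).prodMk differentiable_fun_id)
  -- the square factors
  have hsq0 : HasDerivAt (fun t : ℝ => t ^ 2) 0 0 := by
    simpa using hasDerivAt_pow 2 (0 : ℝ)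
  have hsq1 : HasDerivAt (fun t : ℝ => (1 - t) ^ 2) 0 1 := by
    have h := ((hasDerivAt_id (1 : ℝ)).const_sub 1).pow 2
    refine h.congr_deriv ?_
    norm_num
  -- slice functions of the x-partial / y-partial of the corner interpolant
  have hpdxPt0 : (fun b => pdx (bicubicCorner u) 0 b)
      = combo (pdx u 0 0) (pdx u 0 1) (pdxy u 0 0) (pdxy u 0 1) := funext (pdxP0 u)
  have hpdxPt1 : (fun b => pdx (bicubicCorner u) 1 b)
      = combo (pdx u 1 0) (pdx u 1 1) (pdxy u 1 0) (pdxy u 1 1) := funext (pdxP1 u)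
  have hpdyPt0 : (fun a => pdy (bicubicCorner u) a 0)
      = combo (pdy u 0 0) (pdy u 1 0) (pdxy u 0 0) (pdxy u 1 0) := funext (pdyP0 u)
  have hpdyPt1 : (fun a => pdy (bicubicCorner u) a 1)
      = combo (pdy u 0 1) (pdy u 1 1) (pdxy u 0 1) (pdxy u 1 1) := funext (pdyP1 u)
  -- derivatives of t ↦ pdy ũ t j at the corners
  have hA00 : HasDerivAt (fun t => pdy (fun a b => u a b - bicubicCorner u a b) t 0)
      (pdxy u 0 0 - pdxy u 0 0) 0 := by
    have hP' : HasDerivAt (fun a => pdy (bicubicCorner u) a 0) (pdxy u 0 0) 0 := by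
      rw [hpdyPt0]; exact combo_hasDerivAt_zero _ _ _ _
    exact ((hdyx hu 0 0).sub hP').congr_of_eventuallyEq
      (Filter.Eventually.of_forall fun t => uty hu t 0)
  have hA01 : HasDerivAt (fun t => pdy (fun a b => u a b - bicubicCorner u a b) t 1)
      (pdxy u 0 1 - pdxy u 0 1) 0 := by
    have hP' : HasDerivAt (fun a => pdy (bicubicCorner u) a 1) (pdxy u 0 1) 0 := by
      rw [hpdyPt1]; exact combo_hasDerivAt_zero _ _ _ _
    exact ((hdyx hu 0 1).sub hP').congr_of_eventuallyEq
      (Filter.Eventually.of_forall fun t => uty hu t 1)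
  have hA10 : HasDerivAt (fun t => pdy (fun a b => u a b - bicubicCorner u a b) t 0)
      (pdxy u 1 0 - pdxy u 1 0) 1 := by
    have hP' : HasDerivAt (fun a => pdy (bicubicCorner u) a 0) (pdxy u 1 0) 1 := by
      rw [hpdyPt0]; exact combo_hasDerivAt_one _ _ _ _
    exact ((hdyx hu 1 0).sub hP').congr_of_eventuallyEq
      (Filter.Eventually.of_forall fun t => uty hu t 0)
  have hA11 : HasDerivAt (fun t => pdy (fun a b => u a b - bicubicCorner u a b) t 1)
      (pdxy u 1 1 - pdxy u 1 1) 1 := by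
    have hP' : HasDerivAt (fun a => pdy (bicubicCorner u) a 1) (pdxy u 1 1) 1 := by
      rw [hpdyPt1]; exact combo_hasDerivAt_one _ _ _ _
    exact ((hdyx hu 1 1).sub hP').congr_of_eventuallyEq
      (Filter.Eventually.of_forall fun t => uty hu t 1)
  -- derivatives of t ↦ pdx ũ i t at the corners
  have hB00 : HasDerivAt (fun t => pdx (fun a b => u a b - bicubicCorner u a b) 0 t)
      (pdxy u 0 0 - pdxy u 0 0) 0 := by
    have hP' : HasDerivAt (fun b => pdx (bicubicCorner u) 0 b) (pdxy u 0 0) 0 := by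
      rw [hpdxPt0]; exact combo_hasDerivAt_zero _ _ _ _
    exact ((hdxy hu 0 0).sub hP').congr_of_eventuallyEq
      (Filter.Eventually.of_forall fun t => utx hu 0 t)
  have hB10 : HasDerivAt (fun t => pdx (fun a b => u a b - bicubicCorner u a b) 1 t)
      (pdxy u 1 0 - pdxy u 1 0) 0 := by
    have hP' : HasDerivAt (fun b => pdx (bicubicCorner u) 1 b) (pdxy u 1 0) 0 := by
      rw [hpdxPt1]; exact combo_hasDerivAt_zero _ _ _ _
    exact ((hdxy hu 1 0).sub hP').congr_of_eventuallyEq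
      (Filter.Eventually.of_forall fun t => utx hu 1 t)
  have hB01 : HasDerivAt (fun t => pdx (fun a b => u a b - bicubicCorner u a b) 0 t)
      (pdxy u 0 1 - pdxy u 0 1) 1 := by
    have hP' : HasDerivAt (fun b => pdx (bicubicCorner u) 0 b) (pdxy u 0 1) 1 := by
      rw [hpdxPt0]; exact combo_hasDerivAt_one _ _ _ _
    exact ((hdxy hu 0 1).sub hP').congr_of_eventuallyEq
      (Filter.Eventually.of_forall fun t => utx hu 0 t)
  have hB11 : HasDerivAt (fun t => pdx (fun a b => u a b - bicubicCorner u a b) 1 t)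
      (pdxy u 1 1 - pdxy u 1 1) 1 := by
    have hP' : HasDerivAt (fun b => pdx (bicubicCorner u) 1 b) (pdxy u 1 1) 1 := by
      rw [hpdxPt1]; exact combo_hasDerivAt_one _ _ _ _
    exact ((hdxy hu 1 1).sub hP').congr_of_eventuallyEq
      (Filter.Eventually.of_forall fun t => utx hu 1 t)
  refine ⟨?_, ?_, ?_, ?_, ?_, ?_, ?_, ?_⟩
  · -- uhat 0 y = u 0 y
    rw [huhat 0 y]; simp only [hermiteTransfinite]
    rw [uty hu 0 0, uty hu 0 1, pdyP0 u 0, pdyP1 u 0, combo_zero, combo_zero, bc00, bc01]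
    simp only [H0_zero, H1_zero, G0_zero, G1_zero]
    ring
  · -- uhat 1 y = u 1 y
    rw [huhat 1 y]; simp only [hermiteTransfinite]
    rw [uty hu 1 0, uty hu 1 1, pdyP0 u 1, pdyP1 u 1, combo_one, combo_one, bc10, bc11]
    simp only [H0_one, H1_one, G0_one, G1_one]
    ring
  · -- uhat x 0 = u x 0
    rw [huhat x 0]; simp only [hermiteTransfinite]
    rw [utx hu 0 0, utx hu 1 0, pdxP0 u 0, pdxP1 u 0, combo_zero, combo_zero, bc00, bc10]
    simp only [H0_zero, H1_zero, G0_zero, G1_zero]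
    ring
  · -- uhat x 1 = u x 1
    rw [huhat x 1]; simp only [hermiteTransfinite]
    rw [utx hu 0 1, utx hu 1 1, pdxP0 u 1, pdxP1 u 1, combo_one, combo_one, bc01, bc11]
    simp only [H0_one, H1_one, G0_one, G1_one]
    ring
  · -- pdx uhat 0 y = pdx u 0 y
    have hrest : DifferentiableAt ℝ (fun t => (1-t)^2*(y^2*((1-y)^2*φ t y))) 0 :=
      ((((differentiable_const (1:ℝ)).sub differentiable_fun_id).pow 2).mul
        ((differentiable_const (y^2)).mul
          ((differentiable_const ((1-y)^2)).mul (hφx y)))).differentiableAt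
    have hB : HasDerivAt (fun t => t^2 * ((1-t)^2*(y^2*((1-y)^2*φ t y)))) 0 0 := by
      have h := hsq0.mul hrest.hasDerivAt
      refine h.congr_deriv ?_
      norm_num
    have hD0 := (hB.add ((((((((((hasDerivAt_H0 0).mul_const (u 0 y - bicubicCorner u 0 y)).add
        ((hasDerivAt_H1 0).mul_const (u 1 y - bicubicCorner u 1 y))).add
        ((hutx hu 0 0).const_mul (H0 y))).add
        ((hutx hu 0 1).const_mul (H1 y))).add
        ((hasDerivAt_G0 0).mul_const
          (pdx (fun a b => u a b - bicubicCorner u a b) 0 y))).add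
        ((hasDerivAt_G1 0).mul_const
          (pdx (fun a b => u a b - bicubicCorner u a b) 1 y))).add
        (hA00.const_mul (G0 y))).add
        (hA01.const_mul (G1 y))))).add (hPx u 0 y)
    have heq : (fun t => uhat t y) =ᶠ[nhds (0:ℝ)] (fun t =>
        t^2 * ((1-t)^2*(y^2*((1-y)^2*φ t y)))
        + (H0 t * (u 0 y - bicubicCorner u 0 y) + H1 t * (u 1 y - bicubicCorner u 1 y)
          + H0 y * (u t 0 - bicubicCorner u t 0) + H1 y * (u t 1 - bicubicCorner u t 1)
          + G0 t * pdx (fun a b => u a b - bicubicCorner u a b) 0 y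
          + G1 t * pdx (fun a b => u a b - bicubicCorner u a b) 1 y
          + G0 y * pdy (fun a b => u a b - bicubicCorner u a b) t 0
          + G1 y * pdy (fun a b => u a b - bicubicCorner u a b) t 1)
        + bicubicCorner u t y) :=
      Filter.Eventually.of_forall fun t => by
        simp only [huhat, hermiteTransfinite]; ring
    have hD := hD0.congr_of_eventuallyEq heq
    rw [show pdx uhat 0 y = deriv (fun t => uhat t y) 0 from rfl, hD.deriv,
      utx hu 0 y, pdxP0 u 0, pdxP0 u 1, combo_zero, combo_one]
    ring
  · -- pdx uhat 1 y = pdx u 1 y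
    have hrest : DifferentiableAt ℝ (fun t => t^2*(y^2*((1-y)^2*φ t y))) 1 :=
      ((differentiable_fun_id.pow 2).mul
        ((differentiable_const (y^2)).mul
          ((differentiable_const ((1-y)^2)).mul (hφx y)))).differentiableAt
    have hB : HasDerivAt (fun t => (1-t)^2 * (t^2*(y^2*((1-y)^2*φ t y)))) 0 1 := by
      have h := hsq1.mul hrest.hasDerivAt
      refine h.congr_deriv ?_
      norm_num
    have hD0 := (hB.add ((((((((((hasDerivAt_H0 1).mul_const (u 0 y - bicubicCorner u 0 y)).add
        ((hasDerivAt_H1 1).mul_const (u 1 y - bicubicCorner u 1 y))).add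
        ((hutx hu 1 0).const_mul (H0 y))).add
        ((hutx hu 1 1).const_mul (H1 y))).add
        ((hasDerivAt_G0 1).mul_const
          (pdx (fun a b => u a b - bicubicCorner u a b) 0 y))).add
        ((hasDerivAt_G1 1).mul_const
          (pdx (fun a b => u a b - bicubicCorner u a b) 1 y))).add
        (hA10.const_mul (G0 y))).add
        (hA11.const_mul (G1 y))))).add (hPx u 1 y)
    have heq : (fun t => uhat t y) =ᶠ[nhds (1:ℝ)] (fun t =>
        (1-t)^2 * (t^2*(y^2*((1-y)^2*φ t y)))
        + (H0 t * (u 0 y - bicubicCorner u 0 y) + H1 t * (u 1 y - bicubicCorner u 1 y)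
          + H0 y * (u t 0 - bicubicCorner u t 0) + H1 y * (u t 1 - bicubicCorner u t 1)
          + G0 t * pdx (fun a b => u a b - bicubicCorner u a b) 0 y
          + G1 t * pdx (fun a b => u a b - bicubicCorner u a b) 1 y
          + G0 y * pdy (fun a b => u a b - bicubicCorner u a b) t 0
          + G1 y * pdy (fun a b => u a b - bicubicCorner u a b) t 1)
        + bicubicCorner u t y) :=
      Filter.Eventually.of_forall fun t => by
        simp only [huhat, hermiteTransfinite]; ring
    have hD := hD0.congr_of_eventuallyEq heq
    rw [show pdx uhat 1 y = deriv (fun t => uhat t y) 1 from rfl, hD.deriv,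
      utx hu 1 y, pdxP1 u 0, pdxP1 u 1, combo_zero, combo_one]
    ring
  · -- pdy uhat x 0 = pdy u x 0
    have hrest : DifferentiableAt ℝ (fun t => (1-t)^2*(x^2*((1-x)^2*φ x t))) 0 :=
      ((((differentiable_const (1:ℝ)).sub differentiable_fun_id).pow 2).mul
        ((differentiable_const (x^2)).mul
          ((differentiable_const ((1-x)^2)).mul (hφy x)))).differentiableAt
    have hB : HasDerivAt (fun t => t^2 * ((1-t)^2*(x^2*((1-x)^2*φ x t)))) 0 0 := by
      have h := hsq0.mul hrest.hasDerivAt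
      refine h.congr_deriv ?_
      norm_num
    have hD0 := (hB.add (((((((((huty hu 0 0).const_mul (H0 x)).add
        ((huty hu 1 0).const_mul (H1 x))).add
        ((hasDerivAt_H0 0).mul_const (u x 0 - bicubicCorner u x 0))).add
        ((hasDerivAt_H1 0).mul_const (u x 1 - bicubicCorner u x 1))).add
        (hB00.const_mul (G0 x))).add
        (hB10.const_mul (G1 x))).add
        ((hasDerivAt_G0 0).mul_const
          (pdy (fun a b => u a b - bicubicCorner u a b) x 0))).add
        ((hasDerivAt_G1 0).mul_const
          (pdy (fun a b => u a b - bicubicCorner u a b) x 1)))).add (hPy u x 0)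
    have heq : (fun t => uhat x t) =ᶠ[nhds (0:ℝ)] (fun t =>
        t^2 * ((1-t)^2*(x^2*((1-x)^2*φ x t)))
        + (H0 x * (u 0 t - bicubicCorner u 0 t) + H1 x * (u 1 t - bicubicCorner u 1 t)
          + H0 t * (u x 0 - bicubicCorner u x 0) + H1 t * (u x 1 - bicubicCorner u x 1)
          + G0 x * pdx (fun a b => u a b - bicubicCorner u a b) 0 t
          + G1 x * pdx (fun a b => u a b - bicubicCorner u a b) 1 t
          + G0 t * pdy (fun a b => u a b - bicubicCorner u a b) x 0
          + G1 t * pdy (fun a b => u a b - bicubicCorner u a b) x 1)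
        + bicubicCorner u x t) :=
      Filter.Eventually.of_forall fun t => by
        simp only [huhat, hermiteTransfinite]; ring
    have hD := hD0.congr_of_eventuallyEq heq
    rw [show pdy uhat x 0 = deriv (fun t => uhat x t) 0 from rfl, hD.deriv,
      uty hu x 0, pdyP0 u 0, pdyP0 u 1, combo_zero, combo_one]
    ring
  · -- pdy uhat x 1 = pdy u x 1
    have hrest : DifferentiableAt ℝ (fun t => t^2*(x^2*((1-x)^2*φ x t))) 1 :=
      ((differentiable_fun_id.pow 2).mul
        ((differentiable_const (x^2)).mul
          ((differentiable_const ((1-x)^2)).mul (hφy x)))).differentiableAt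
    have hB : HasDerivAt (fun t => (1-t)^2 * (t^2*(x^2*((1-x)^2*φ x t)))) 0 1 := by
      have h := hsq1.mul hrest.hasDerivAt
      refine h.congr_deriv ?_
      norm_num
    have hD0 := (hB.add (((((((((huty hu 0 1).const_mul (H0 x)).add
        ((huty hu 1 1).const_mul (H1 x))).add
        ((hasDerivAt_H0 1).mul_const (u x 0 - bicubicCorner u x 0))).add
        ((hasDerivAt_H1 1).mul_const (u x 1 - bicubicCorner u x 1))).add
        (hB01.const_mul (G0 x))).add
        (hB11.const_mul (G1 x))).add
        ((hasDerivAt_G0 1).mul_const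
          (pdy (fun a b => u a b - bicubicCorner u a b) x 0))).add
        ((hasDerivAt_G1 1).mul_const
          (pdy (fun a b => u a b - bicubicCorner u a b) x 1)))).add (hPy u x 1)
    have heq : (fun t => uhat x t) =ᶠ[nhds (1:ℝ)] (fun t =>
        (1-t)^2 * (t^2*(x^2*((1-x)^2*φ x t)))
        + (H0 x * (u 0 t - bicubicCorner u 0 t) + H1 x * (u 1 t - bicubicCorner u 1 t)
          + H0 t * (u x 0 - bicubicCorner u x 0) + H1 t * (u x 1 - bicubicCorner u x 1)
          + G0 x * pdx (fun a b => u a b - bicubicCorner u a b) 0 t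
          + G1 x * pdx (fun a b => u a b - bicubicCorner u a b) 1 t
          + G0 t * pdy (fun a b => u a b - bicubicCorner u a b) x 0
          + G1 t * pdy (fun a b => u a b - bicubicCorner u a b) x 1)
        + bicubicCorner u x t) :=
      Filter.Eventually.of_forall fun t => by
        simp only [huhat, hermiteTransfinite]; ring
    have hD := hD0.congr_of_eventuallyEq heq
    rw [show pdy uhat x 1 = deriv (fun t => uhat x t) 1 from rfl, hD.deriv,
      uty hu x 1, pdyP1 u 0, pdyP1 u 1, combo_zero, combo_one]
    ring
end

section
/- Let f1 : ℝ → ℝ be C¹ and let p1 : ℝ → ℝ be a polynomial function of degree at most 3; set u(x,y) = f1(x)·p1(y). Suppose that u, ∂u/∂x, ∂u/∂y, and ∂²u/∂x∂y all vanish at the four corners (0,0), (1,0), (0,1), (1,1). Then u coincides on [0,1]² with its Hermite transfinite boundary interpolant s on the unit square. -/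
lemma hermite_cubic (p : Polynomial ℝ) (hp : p.degree ≤ 3) (t : ℝ) :
    p.eval t = H0 t * p.eval 0 + H1 t * p.eval 1
      + G0 t * p.derivative.eval 0 + G1 t * p.derivative.eval 1 := by
  have hnd : p.natDegree < 4 := by
    have h := Polynomial.natDegree_le_of_degree_le (n := 3) hp
    omega
  have hnd' : p.derivative.natDegree < 4 := by
    have := p.natDegree_derivative_le
    omega
  have e1 : ∀ s : ℝ, p.eval s = ∑ i ∈ Finset.range 4, p.coeff i * s ^ i :=
    fun s => Polynomial.eval_eq_sum_range' hnd s
  have e2 : ∀ s : ℝ, p.derivative.eval s = ∑ i ∈ Finset.range 4, p.derivative.coeff i * s ^ i :=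
    fun s => Polynomial.eval_eq_sum_range' hnd' s
  have hc4 : p.coeff 4 = 0 := Polynomial.coeff_eq_zero_of_natDegree_lt hnd
  simp only [hc4, e1, e2, Finset.sum_range_succ, Finset.sum_range_zero,
    Polynomial.coeff_derivative]
  unfold H0 H1 G0 G1
  push_cast
  ring

/-- First step in the proof of Theorem 3.2: if `u(x,y) = f1(x)·p1(y)` with `deg p1 ≤ 3`
and `u, ∂u/∂x, ∂u/∂y, ∂²u/∂x∂y` vanish at the four corners, then `u` equals its Hermite
transfinite boundary interpolant on the unit square. -/
theorem hermite_transfinite_reproduces_product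
    (f1 : ℝ → ℝ) (hf1 : ContDiff ℝ 1 f1)
    (p1 : Polynomial ℝ) (hp1 : p1.degree ≤ 3)
    (u : ℝ → ℝ → ℝ) (hu : ∀ x y : ℝ, u x y = f1 x * p1.eval y)
    (hcorner : ∀ ci cj : ℝ, (ci = 0 ∨ ci = 1) → (cj = 0 ∨ cj = 1) →
      u ci cj = 0 ∧ pdx u ci cj = 0 ∧ pdy u ci cj = 0 ∧ pdxy u ci cj = 0) :
    ∀ x ∈ Set.Icc (0 : ℝ) 1, ∀ y ∈ Set.Icc (0 : ℝ) 1,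
      u x y = hermiteTransfinite u x y := by
  have hdf : Differentiable ℝ f1 := hf1.differentiable one_ne_zero
  have hpdx : ∀ x y : ℝ, pdx u x y = deriv f1 x * p1.eval y := by
    intro x y
    unfold pdx
    have hfe : (fun t => u t y) = fun t => f1 t * p1.eval y := funext fun t => hu t y
    rw [hfe, deriv_mul_const (hdf x)]
  have hpdy : ∀ x y : ℝ, pdy u x y = f1 x * p1.derivative.eval y := by
    intro x y
    unfold pdy
    have hfe : (fun t => u x t) = fun t => f1 x * p1.eval t := funext fun t => hu x t
    rw [hfe, deriv_const_mul_field, Polynomial.deriv]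
  have hpdxy : ∀ x y : ℝ, pdxy u x y = deriv f1 x * p1.derivative.eval y := by
    intro x y
    unfold pdxy pdx
    have hfe : (fun t => pdy u t y) = fun t => f1 t * p1.derivative.eval y :=
      funext fun t => hpdy t y
    rw [hfe, deriv_mul_const (hdf x)]
  intro x _ y _
  obtain ⟨c1, c2, c3, c4⟩ := hcorner 0 0 (Or.inl rfl) (Or.inl rfl)
  obtain ⟨d1, d2, d3, d4⟩ := hcorner 0 1 (Or.inl rfl) (Or.inr rfl)
  obtain ⟨e1, e2, e3, e4⟩ := hcorner 1 0 (Or.inr rfl) (Or.inl rfl)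
  obtain ⟨g1, g2, g3, g4⟩ := hcorner 1 1 (Or.inr rfl) (Or.inr rfl)
  simp only [hu, hpdx, hpdy, hpdxy] at c1 c2 c3 c4 d1 d2 d3 d4 e1 e2 e3 e4 g1 g2 g3 g4
  simp only [hermiteTransfinite, hu, hpdx, hpdy]
  linear_combination (f1 x - H0 x * f1 0 - H1 x * f1 1 - G0 x * deriv f1 0
      - G1 x * deriv f1 1) * hermite_cubic p1 hp1 y
    - H0 x * H0 y * c1 - H0 x * H1 y * d1 - H0 x * G0 y * c3 - H0 x * G1 y * d3
    - H1 x * H0 y * e1 - H1 x * H1 y * g1 - H1 x * G0 y * e3 - H1 x * G1 y * g3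
    - G0 x * H0 y * c2 - G0 x * H1 y * d2 - G0 x * G0 y * c4 - G0 x * G1 y * d4
    - G1 x * H0 y * e2 - G1 x * H1 y * g2 - G1 x * G0 y * e4 - G1 x * G1 y * g4
end
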